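/- Let X be a Banach space such that every element of X** is the weak* limit of a sequence from (the canonical image of) X. Then for every closed separable subspace Z₀ of X**, there exists a closed separable subspace Z of X such that Z₀ is contained in the double annihilator Z^{⊥⊥} ⊆ X**. -/

import Mathlib

open NormedSpace Filter Topology

noncomputable section

/-- The annihilator of a subspace `Y ⊆ X` inside the continuous dual of `X`. -/
def annih {X : Type*} [SeminormedAddCommGroup X] [NormedSpace ℝ X] (Y : Submodule ℝ X) :
    Submodule ℝ (StrongDual ℝ X) where
  carrier := {f | ∀ y ∈ Y, f y = 0}
  add_mem' := by
    intro a b ha hb y hy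
    simp [ContinuousLinearMap.add_apply, ha y hy, hb y hy]
  zero_mem' := by intro y hy; rfl
  smul_mem' := by
    intro c f hf y hy
    simp [hf y hy]

/-- A Banach space is reflexive iff the canonical embedding into its bidual is surjective. -/
def BReflexive (X : Type*) [SeminormedAddCommGroup X] [NormedSpace ℝ X] : Prop :=
  Function.Surjective (inclusionInDoubleDual ℝ X)

/-- A Banach space is coreflexive iff `X**/J_X(X)` is reflexive. -/
def Coreflexive (X : Type*) [SeminormedAddCommGroup X] [NormedSpace ℝ X] : Prop :=
  @BReflexive (@HasQuotient.Quotient _ _ (Submodule.hasQuotient (M := StrongDual ℝ (StrongDual ℝ X))) (LinearMap.range (inclusionInDoubleDual ℝ X).toLinearMap))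
    (Submodule.Quotient.seminormedAddCommGroup (M := StrongDual ℝ (StrongDual ℝ X)) _)
    (Submodule.Quotient.normedSpace (M := StrongDual ℝ (StrongDual ℝ X)) _ ℝ)

/-- The adjoint of a continuous linear map between normed spaces. -/
def adj {E F : Type*} [SeminormedAddCommGroup E] [NormedSpace ℝ E]
    [SeminormedAddCommGroup F] [NormedSpace ℝ F] (f : E →L[ℝ] F) :
    StrongDual ℝ F →L[ℝ] StrongDual ℝ E :=
  (ContinuousLinearMap.compL ℝ E F ℝ).flip f

/-- `X` is weak*-sequentially dense in its bidual. -/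
def WStarSeqDense (X : Type*) [SeminormedAddCommGroup X] [NormedSpace ℝ X] : Prop :=
  ∀ F : StrongDual ℝ (StrongDual ℝ X), ∃ x : ℕ → X, ∀ f : StrongDual ℝ X,
    Tendsto (fun n => inclusionInDoubleDual ℝ X (x n) f) atTop (𝓝 (F f))

/-- `x` is a point of weak-to-norm continuity of the closed unit ball of `X`. -/
def wPC (X : Type*) [SeminormedAddCommGroup X] [NormedSpace ℝ X] (x : X) : Prop :=
  ∀ l : Filter X, (∀ᶠ y in l, ‖y‖ ≤ 1) →
    (∀ f : StrongDual ℝ X, Tendsto (fun y => f y) l (𝓝 (f x))) →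
    Tendsto id l (𝓝 x)
theorem stmt1 (X : Type*) [NormedAddCommGroup X] [NormedSpace ℝ X] [CompleteSpace X]
    (hX : WStarSeqDense X)
    (Z₀ : Submodule ℝ (StrongDual ℝ (StrongDual ℝ X))) (hZ₀c : IsClosed (Z₀ : Set (StrongDual ℝ (StrongDual ℝ X))))
    (hZ₀s : TopologicalSpace.SeparableSpace ↥Z₀) :
    ∃ Z : Submodule ℝ X, IsClosed (Z : Set X) ∧ TopologicalSpace.SeparableSpace ↥Z ∧
      Z₀ ≤ annih (annih Z) := by
  
  haveI : Nonempty ↥Z₀ := ⟨0⟩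
  obtain ⟨u, hu⟩ := TopologicalSpace.exists_dense_seq ↥Z₀
  choose x hx using fun k => hX (u k)
  set s : Set X := Set.range (fun p : ℕ × ℕ => x p.1 p.2) with hs
  set Z : Submodule ℝ X := (Submodule.span ℝ s).topologicalClosure with hZ
  refine ⟨Z, Submodule.isClosed_topologicalClosure _, ?_, ?_⟩
  · have hsep : TopologicalSpace.IsSeparable (Z : Set X) := by
      have : TopologicalSpace.IsSeparable (Submodule.span ℝ s : Set X) :=
        (Set.countable_range _).isSeparable.span
      simpa [hZ, Submodule.topologicalClosure_coe] using this.closure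
    exact hsep.separableSpace
  · intro F hF f hf
    have hk : ∀ k : ℕ, ((u k : StrongDual ℝ (StrongDual ℝ X)) f) = 0 := by
      intro k
      have hz : ∀ n, f (x k n) = 0 := by
        intro n
        apply hf
        exact Submodule.le_topologicalClosure _
          (Submodule.subset_span (Set.mem_range.2 ⟨(k, n), rfl⟩))
      have h1 := hx k f
      simp only [NormedSpace.dual_def, hz] at h1
      exact (tendsto_nhds_unique tendsto_const_nhds h1).symm
    have hcont : Continuous (fun G : ↥Z₀ => (G : StrongDual ℝ (StrongDual ℝ X)) f) := by
      exact (ContinuousLinearMap.apply ℝ ℝ f).continuous.comp continuous_subtype_val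
    have : (fun G : ↥Z₀ => (G : StrongDual ℝ (StrongDual ℝ X)) f) = fun _ => 0 := by
      apply Continuous.ext_on hu hcont continuous_const
      rintro _ ⟨k, rfl⟩
      exact hk k
    have := congrFun this ⟨F, hF⟩
    simpa using this
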